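/- Let $F_n$ be the $n \times n$ tridiagonal matrix with $1$ on the main diagonal and superdiagonal and $-1$ on the subdiagonal. For $0 \le k \le n-1$, the sum $S_{n-k}$ of all principal minors of order $n-k$ of $F_n$ equals $\sum_{j_1 + j_2 + \cdots + j_{k+1} = n-k} f_{j_1+1} f_{j_2+1} \cdots f_{j_{k+1}+1}$, where the sum is over all $(k+1)$-tuples of nonnegative integers $j_1, \ldots, j_{k+1}$ summing to $n-k$. -/

import Mathlib

def tri (a b : ℕ) : ℤ :=
  if a = b then 1 else if b = a + 1 then 1 else if a = b + 1 then -1 else 0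

def dval : List ℕ → ℤ
  | [] => 1
  | [_] => 1
  | a :: b :: l => if b = a + 1 then dval (b :: l) + dval l else dval (b :: l)

def Lb : ℕ → List ℕ → List ℕ
  | _, [] => []
  | s, a :: ps => List.range' s a ++ Lb (s + a + 1) ps

lemma mem_Lb_lower {x : ℕ} : ∀ {ps : List ℕ} {s : ℕ}, x ∈ Lb s ps → s ≤ x := by
  intro ps
  induction ps with
  | nil => intro s h; simp [Lb] at h
  | cons a tl ih =>
    intro s h
    simp only [Lb, List.mem_append, List.mem_range'_1] at h
    rcases h with h | h
    · omega
    · have := ih h; omega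

lemma mem_Lb_upper {x : ℕ} : ∀ {ps : List ℕ} {s : ℕ},
    x ∈ Lb s ps → x + 1 < s + ps.sum + ps.length := by
  intro ps
  induction ps with
  | nil => intro s h; simp [Lb] at h
  | cons a tl ih =>
    intro s h
    simp only [Lb, List.mem_append, List.mem_range'_1] at h
    simp only [List.sum_cons, List.length_cons]
    rcases h with h | h
    · omega
    · have := ih h; omega

lemma length_Lb : ∀ (ps : List ℕ) (s : ℕ), (Lb s ps).length = ps.sum := by
  intro ps
  induction ps with
  | nil => intro s; simp [Lb]
  | cons a tl ih => intro s; simp [Lb, ih]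

lemma sorted_Lb : ∀ (ps : List ℕ) (s : ℕ), (Lb s ps).Pairwise (· < ·) := by
  intro ps
  induction ps with
  | nil => intro s; simp [Lb]
  | cons a tl ih =>
    intro s
    rw [Lb, List.pairwise_append]
    refine ⟨List.pairwise_lt_range' (s := s) (n := a), ih _, ?_⟩
    intro x hx y hy
    simp only [List.mem_range'_1] at hx
    have := mem_Lb_lower hy
    omega

lemma sorted_eq_of_mem_iff : ∀ {l r : List ℕ}, l.Pairwise (· < ·) → r.Pairwise (· < ·) →
    (∀ x, x ∈ l ↔ x ∈ r) → l = r := by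
  intro l
  induction l with
  | nil =>
    intro r _ hr h
    cases r with
    | nil => rfl
    | cons b r' => exact absurd ((h b).2 (by simp)) (by simp)
  | cons a l' ih =>
    intro r hl hr h
    cases r with
    | nil => exact absurd ((h a).1 (by simp)) (by simp)
    | cons b r' =>
      have hab : a = b := by
        have h1 := (h a).1 (by simp)
        have h2 := (h b).2 (by simp)
        simp only [List.mem_cons] at h1 h2
        rcases h1 with h1 | h1
        · exact h1
        · rcases h2 with h2 | h2
          · exact h2.symm
          · have := (List.pairwise_cons.1 hl).1 b h2
            have := (List.pairwise_cons.1 hr).1 a h1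
            omega
      subst hab
      have : l' = r' := by
        refine ih (List.pairwise_cons.1 hl).2 (List.pairwise_cons.1 hr).2 ?_
        intro x
        constructor
        · intro hx
          have hxa : a < x := (List.pairwise_cons.1 hl).1 x hx
          have := (h x).1 (by simp [hx])
          simp only [List.mem_cons] at this
          rcases this with h' | h'
          · omega
          · exact h'
        · intro hx
          have hxa : a < x := (List.pairwise_cons.1 hr).1 x hx
          have := (h x).2 (by simp [hx])
          simp only [List.mem_cons] at this
          rcases this with h' | h'
          · omega
          · exact h'
      rw [this]

lemma Lb_inj : ∀ {ps qs : List ℕ} {s : ℕ}, ps.length = qs.length →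
    (∀ x, x ∈ Lb s ps ↔ x ∈ Lb s qs) → ps = qs := by
  intro ps
  induction ps with
  | nil =>
    intro qs s hlen _
    cases qs with
    | nil => rfl
    | cons b qs' => simp at hlen
  | cons a ps' ih =>
    intro qs s hlen h
    cases qs with
    | nil => simp at hlen
    | cons b qs' =>
      have hab : a = b := by
        by_contra hne
        rcases Nat.lt_or_ge a b with hlt | hge
        · have h1 : s + a ∈ Lb s (b :: qs') := by
            simp only [Lb, List.mem_append, List.mem_range'_1]; left; omega
          have h2 := (h (s + a)).2 h1
          simp only [Lb, List.mem_append, List.mem_range'_1] at h2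
          rcases h2 with h2 | h2
          · omega
          · have := mem_Lb_lower h2; omega
        · have hlt : b < a := by omega
          have h1 : s + b ∈ Lb s (a :: ps') := by
            simp only [Lb, List.mem_append, List.mem_range'_1]; left; omega
          have h2 := (h (s + b)).1 h1
          simp only [Lb, List.mem_append, List.mem_range'_1] at h2
          rcases h2 with h2 | h2
          · omega
          · have := mem_Lb_lower h2; omega
      subst hab
      have : ps' = qs' := by
        refine ih (by simpa using hlen) (s := s + a + 1) ?_
        intro x
        constructor
        · intro hx
          have hlow := mem_Lb_lower hx
          have := (h x).1 (by simp only [Lb, List.mem_append]; right; exact hx)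
          simp only [Lb, List.mem_append, List.mem_range'_1] at this
          rcases this with h' | h'
          · omega
          · exact h'
        · intro hx
          have hlow := mem_Lb_lower hx
          have := (h x).2 (by simp only [Lb, List.mem_append]; right; exact hx)
          simp only [Lb, List.mem_append, List.mem_range'_1] at this
          rcases this with h' | h'
          · omega
          · exact h'
      rw [this]

lemma sorted_length_le {N : ℕ} : ∀ {l : List ℕ} {s : ℕ}, l.Pairwise (· < ·) →
    (∀ x ∈ l, s ≤ x ∧ x < N) → l.length ≤ N - s := by
  intro l
  induction l with
  | nil => intro s _ _; simp
  | cons a l' ih =>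
    intro s hs hb
    have h1 : ∀ x ∈ l', a + 1 ≤ x ∧ x < N := by
      intro x hx
      have := (List.pairwise_cons.1 hs).1 x hx
      have := (hb x (by simp [hx])).2
      omega
    have := ih (List.pairwise_cons.1 hs).2 h1
    have ha := hb a (by simp)
    simp only [List.length_cons]
    omega

lemma Lb_replicate_zero : ∀ (d s : ℕ), Lb s (List.replicate d 0) = [] := by
  intro d
  induction d with
  | zero => intro s; simp [Lb]
  | succ d ih => intro s; rw [List.replicate_succ, Lb]; simpa using ih _

lemma Lb_surj : ∀ (d : ℕ) (s : ℕ) (l : List ℕ), l.Pairwise (· < ·) →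
    (∀ x ∈ l, s ≤ x ∧ x < s + d) →
    ∃ ps : List ℕ, ps.length = d - l.length + 1 ∧ ps.sum = l.length ∧ Lb s ps = l := by
  intro d
  induction d with
  | zero =>
    intro s l _ hb
    cases l with
    | nil => exact ⟨[0], by simp, by simp, by simp [Lb]⟩
    | cons a l' => have := hb a (by simp); omega
  | succ d ih =>
    intro s l hs hb
    cases l with
    | nil => exact ⟨List.replicate (d + 2) 0, by simp, by simp, Lb_replicate_zero _ _⟩
    | cons a l' =>
      have ha := hb a (by simp)
      rcases Nat.eq_or_lt_of_le ha.1 with heq | hlt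
      · -- s = a : prepend to first block
        obtain ⟨ps', hlen, hsum, hLb⟩ := ih (s + 1) l' (List.pairwise_cons.1 hs).2 (by
          intro x hx
          have := (List.pairwise_cons.1 hs).1 x hx
          have := (hb x (by simp [hx])).2
          omega)
        cases ps' with
        | nil => simp at hlen
        | cons p tl =>
          subst heq
          refine ⟨(p + 1) :: tl, ?_, ?_, ?_⟩
          · simp only [List.length_cons] at hlen ⊢
            omega
          · simp only [List.sum_cons, List.length_cons] at hsum ⊢
            omega
          · rw [Lb, List.range'_succ]
            simp only [List.cons_append]
            rw [show s + (p + 1) + 1 = s + 1 + p + 1 by omega]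
            rw [Lb] at hLb
            rw [hLb]
      · -- a > s
        obtain ⟨ps₂, hlen, hsum, hLb⟩ := ih (s + 1) (a :: l') hs (by
          intro x hx
          have hin := hb x hx
          rcases List.mem_cons.1 hx with rfl | hx'
          · omega
          · have := (List.pairwise_cons.1 hs).1 x hx'
            omega)
        have hll : (a :: l').length ≤ d := by
          have := sorted_length_le (N := s + 1 + d) (s := s + 1) hs (by
            intro x hx
            have hin := hb x hx
            rcases List.mem_cons.1 hx with rfl | hx'
            · omega
            · have := (List.pairwise_cons.1 hs).1 x hx'
              omega)
          omega
        refine ⟨0 :: ps₂, ?_, by simpa using hsum, by rw [Lb]; simpa using hLb⟩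
        simp only [List.length_cons] at hlen hll ⊢
        omega

lemma dval_range'_append : ∀ (a : ℕ) (s : ℕ) (rest : List ℕ), (∀ x ∈ rest, s + a < x) →
    dval (List.range' s a ++ rest) = (Nat.fib (a + 1) : ℤ) * dval rest := by
  intro a
  induction a using Nat.strong_induction_on with
  | _ a ih =>
    match a with
    | 0 => intro s rest h; simp
    | 1 =>
      intro s rest h
      simp only [List.range'_one, List.singleton_append]
      cases rest with
      | nil => simp [dval]
      | cons y l =>
        have hy : s + 1 < y := h y (by simp)
        rw [dval]
        rw [if_neg (by omega)]
        simp [Nat.fib]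
    | a + 2 =>
      intro s rest h
      have e1 : List.range' s (a + 2) = s :: (s+1) :: List.range' (s + 2) a := by
        rw [List.range'_succ, List.range'_succ]
      rw [e1]
      simp only [List.cons_append]
      rw [dval, if_pos rfl]
      have h2 : ((s+1) :: List.range' (s + 2) a) ++ rest = List.range' (s+1) (a+1) ++ rest := by
        rw [List.range'_succ]
      have r1 : dval ((s+1) :: (List.range' (s + 2) a ++ rest)) = (Nat.fib (a + 2) : ℤ) * dval rest := by
        have := ih (a+1) (by omega) (s+1) rest (by intro x hx; have := h x hx; omega)
        rw [List.range'_succ] at this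
        simpa using this
      have r2 : dval (List.range' (s + 2) a ++ rest) = (Nat.fib (a + 1) : ℤ) * dval rest := by
        exact ih a (by omega) (s+2) rest (by intro x hx; have := h x hx; omega)
      rw [r1, r2]
      have hf : Nat.fib (a + 2 + 1) = Nat.fib (a + 1) + Nat.fib (a + 2) := Nat.fib_add_two
      rw [hf]
      push_cast
      ring

lemma dval_Lb : ∀ (ps : List ℕ) (s : ℕ),
    dval (Lb s ps) = (ps.map (fun p => (Nat.fib (p + 1) : ℤ))).prod := by
  intro ps
  induction ps with
  | nil => intro s; simp [Lb, dval]
  | cons a tl ih =>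
    intro s
    rw [Lb, dval_range'_append a s _ (by
      intro x hx
      have := mem_Lb_lower hx
      omega)]
    simp [ih]

lemma tri_of_lt {a b : ℕ} (h : a + 1 < b) : tri a b = 0 := by
  unfold tri; rw [if_neg (by omega), if_neg (by omega), if_neg (by omega)]

lemma tri_of_gt {a b : ℕ} (h : b + 1 < a) : tri a b = 0 := by
  unfold tri; rw [if_neg (by omega), if_neg (by omega), if_neg (by omega)]

lemma det_tri : ∀ (m : ℕ) (v : Fin m → ℕ), StrictMono v →
    (Matrix.of fun a b => tri (v a) (v b)).det = dval (List.ofFn v) := by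
  intro m
  induction m using Nat.strong_induction_on with
  | _ m ih =>
    match m with
    | 0 => intro v _; simp [dval, Matrix.det_isEmpty]
    | 1 =>
      intro v _
      simp [Matrix.det_fin_one, tri, dval]
    | m + 2 =>
      intro v hv
      have hsm1 : StrictMono (v ∘ Fin.succ) := fun a b h => hv (Fin.succ_lt_succ_iff.mpr h)
      have hsm2 : StrictMono (v ∘ Fin.succ ∘ Fin.succ) := fun a b h =>
        hsm1 (Fin.succ_lt_succ_iff.mpr h)
      have hofn : List.ofFn v = v 0 :: v 1 :: List.ofFn (v ∘ Fin.succ ∘ Fin.succ) := by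
        rw [List.ofFn_succ]
        congr 1
        rw [List.ofFn_succ]
        rfl
      have h01 : v 0 < v 1 := hv (by simp [Fin.lt_def])
      rw [Matrix.det_succ_column_zero]
      rw [Fin.sum_univ_succ, Fin.sum_univ_succ]
      have hzero : ∀ i : Fin m,
          (-1 : ℤ) ^ ((i.succ.succ : Fin (m+2)) : ℕ) *
            (Matrix.of fun a b => tri (v a) (v b)) i.succ.succ 0 *
            ((Matrix.of fun a b => tri (v a) (v b)).submatrix i.succ.succ.succAbove Fin.succ).det
            = 0 := by
        intro i
        have h1 : v 1 < v i.succ.succ := hv (by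
          simp [Fin.lt_def])
        have : tri (v i.succ.succ) (v 0) = 0 := tri_of_gt (by omega)
        simp [this]
      rw [Finset.sum_congr rfl (fun i _ => hzero i), Finset.sum_const_zero, add_zero]
      have hs0 : (Fin.succ (0 : Fin (m+1))) = (1 : Fin (m+2)) := by ext; simp
      rw [hs0]
      -- term 0
      have hA : ((Matrix.of fun a b => tri (v a) (v b)).submatrix
          (Fin.succAbove 0) Fin.succ).det = dval (List.ofFn (v ∘ Fin.succ)) := by
        have : ((Matrix.of fun a b => tri (v a) (v b)).submatrix (Fin.succAbove 0) Fin.succ)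
            = Matrix.of fun a b => tri ((v ∘ Fin.succ) a) ((v ∘ Fin.succ) b) := by
          ext a b
          simp [Fin.succAbove_zero]
        rw [this]
        exact ih (m+1) (by omega) _ hsm1
      have hM00 : (Matrix.of fun a b => tri (v a) (v b)) 0 0 = 1 := by
        simp [tri]
      by_cases hc : v 1 = v 0 + 1
      · -- Fibonacci case
        have hM10 : (Matrix.of fun a b => tri (v a) (v b)) 1 0 = -1 := by
          simp only [Matrix.of_apply]
          unfold tri
          rw [if_neg (by omega), if_neg (by omega), if_pos (by omega)]
        -- compute det B
        set B := ((Matrix.of fun a b => tri (v a) (v b)).submatrix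
          (Fin.succAbove 1) Fin.succ) with hB
        have hBdet : B.det = dval (List.ofFn (v ∘ Fin.succ ∘ Fin.succ)) := by
          rw [Matrix.det_succ_row_zero]
          have hB0 : ∀ j : Fin (m+1), B 0 j = tri (v 0) (v j.succ) := by
            intro j
            have : (Fin.succAbove 1 (0 : Fin (m+1))) = (0 : Fin (m+2)) := by
              rw [Fin.succAbove_of_castSucc_lt]
              · rfl
              · simp [Fin.lt_def]
            simp [hB, this]
          rw [Fin.sum_univ_succ]
          have hrest : ∀ j : Fin m,
              (-1 : ℤ) ^ ((j.succ : Fin (m+1)) : ℕ) * B 0 j.succ *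
                (B.submatrix Fin.succ j.succ.succAbove).det = 0 := by
            intro j
            have h2 : v 1 < v j.succ.succ := hv (by simp [Fin.lt_def])
            have : B 0 j.succ = 0 := by
              rw [hB0]
              exact tri_of_lt (by omega)
            simp [this]
          rw [Finset.sum_congr rfl (fun j _ => hrest j), Finset.sum_const_zero, add_zero]
          have hB00 : B 0 0 = 1 := by
            rw [hB0, hs0]
            unfold tri
            rw [if_neg (by omega), if_pos (by omega)]
          have hC : (B.submatrix Fin.succ (Fin.succAbove 0))
              = Matrix.of fun a b => tri ((v ∘ Fin.succ ∘ Fin.succ) a) ((v ∘ Fin.succ ∘ Fin.succ) b) := by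
            ext a b
            have h1 : Fin.succAbove (1 : Fin (m+2)) a.succ = a.succ.succ := by
              rw [Fin.succAbove_of_le_castSucc]
              simp [Fin.le_def]
            simp [hB, Fin.succAbove_zero, h1]
          rw [hB00, hC]
          simpa using ih m (by omega) _ hsm2
        rw [hofn, dval, if_pos hc]
        have hofn1 : List.ofFn (v ∘ Fin.succ) = v 1 :: List.ofFn (v ∘ Fin.succ ∘ Fin.succ) := by
          rw [List.ofFn_succ]; rfl
        rw [hM00, hA, hM10, hBdet, hofn1]
        norm_num [Fin.val_zero, Fin.val_one]
      · -- gap case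
        have hM10 : (Matrix.of fun a b => tri (v a) (v b)) 1 0 = 0 := by
          simp only [Matrix.of_apply]
          exact tri_of_gt (by omega)
        rw [hofn, dval, if_neg hc]
        have hofn1 : List.ofFn (v ∘ Fin.succ) = v 1 :: List.ofFn (v ∘ Fin.succ ∘ Fin.succ) := by
          rw [List.ofFn_succ]; rfl
        rw [hM00, hA, hM10, hofn1]
        norm_num [Fin.val_zero, Fin.val_one]

lemma minor_eq_dval {n : ℕ} (F : Matrix (Fin n) (Fin n) ℤ)
    (hF : ∀ i j : Fin n, F i j = tri i.val j.val) (t : Finset (Fin n)) :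
    ∃ l : List ℕ, l.Pairwise (· < ·) ∧ l.length = t.card ∧
      (∀ x : ℕ, x ∈ l ↔ ∃ p ∈ t, (p : ℕ) = x) ∧
      (F.submatrix (fun x : ↥t => (x : Fin n)) (fun x : ↥t => (x : Fin n))).det = dval l := by
  classical
  set c := t.card with hc
  let e := t.orderIsoOfFin hc.symm
  set v : Fin c → ℕ := fun i => ((e i : Fin n) : ℕ) with hv
  have hmono : StrictMono v := by
    intro a b hab
    have h1 : e a < e b := e.strictMono hab
    exact h1
  refine ⟨List.ofFn v, List.pairwise_ofFn.2 (fun _ _ h => hmono h), by simp, ?_, ?_⟩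
  · intro x
    rw [List.mem_ofFn]
    constructor
    · rintro ⟨a, rfl⟩
      exact ⟨(e a : Fin n), (e a).2, rfl⟩
    · rintro ⟨p, hp, rfl⟩
      exact ⟨e.symm ⟨p, hp⟩, by simp [v]⟩
  · have key := Matrix.det_submatrix_equiv_self e.toEquiv
      (F.submatrix (fun x : ↥t => (x : Fin n)) (fun x : ↥t => (x : Fin n)))
    have heq : (F.submatrix (fun x : ↥t => (x : Fin n)) (fun x : ↥t => (x : Fin n))).submatrix
        e.toEquiv e.toEquiv = Matrix.of fun a b => tri (v a) (v b) := by
      ext a b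
      simp [Matrix.submatrix_apply, hF, v]
    rw [← key, heq, det_tri c v hmono]


theorem sum_principal_minors_tridiagonal_fib (n k : ℕ) (hk : k ≤ n - 1) (hn : 1 ≤ n)
    (F : Matrix (Fin n) (Fin n) ℤ)
    (hF : ∀ i j : Fin n, F i j =
      if (i : ℕ) = (j : ℕ) then 1
      else if (j : ℕ) = (i : ℕ) + 1 then 1
      else if (i : ℕ) = (j : ℕ) + 1 then -1 else 0) :
    ∑ t ∈ Finset.powersetCard (n - k) (Finset.univ : Finset (Fin n)),
        (F.submatrix (fun x : t => (x : Fin n)) (fun x : t => (x : Fin n))).det =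
      ∑ j ∈ Finset.Nat.antidiagonalTuple (k + 1) (n - k),
        ∏ s : Fin (k + 1), (Nat.fib (j s + 1) : ℤ) := by
  classical
  have hF' : ∀ i j : Fin n, F i j = tri i.val j.val := by
    intro i j; rw [hF]; rfl
  set m := n - k with hm
  have hkm : k + m = n := by omega
  have hbound : ∀ j ∈ Finset.Nat.antidiagonalTuple (k+1) m,
      ∀ x ∈ (Lb 0 (List.ofFn j)).toFinset, x < n := by
    intro j hj x hx
    rw [List.mem_toFinset] at hx
    have h1 := mem_Lb_upper hx
    have hsum : (List.ofFn j).sum = m := by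
      rw [List.sum_ofFn]; exact Finset.Nat.mem_antidiagonalTuple.1 hj
    rw [hsum, List.length_ofFn] at h1
    omega
  rw [eq_comm]
  refine Finset.sum_bij
    (fun j hj => Finset.attachFin (Lb 0 (List.ofFn j)).toFinset (hbound j hj)) ?_ ?_ ?_ ?_
  · -- maps into powersetCard
    intro j hj
    rw [Finset.mem_powersetCard_univ, Finset.card_attachFin,
      List.toFinset_card_of_nodup (sorted_Lb _ _).nodup, length_Lb, List.sum_ofFn]
    exact Finset.Nat.mem_antidiagonalTuple.1 hj
  · -- injective
    intro j₁ hj₁ j₂ hj₂ heq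
    have hmem : ∀ x, x ∈ Lb 0 (List.ofFn j₁) ↔ x ∈ Lb 0 (List.ofFn j₂) := by
      intro x
      constructor
      · intro hx
        have hxn : x < n := hbound j₁ hj₁ x (List.mem_toFinset.2 hx)
        have : (⟨x, hxn⟩ : Fin n) ∈ Finset.attachFin (Lb 0 (List.ofFn j₁)).toFinset
            (hbound j₁ hj₁) := by
          rw [Finset.mem_attachFin]; exact List.mem_toFinset.2 hx
        rw [heq, Finset.mem_attachFin] at this
        exact List.mem_toFinset.1 this
      · intro hx
        have hxn : x < n := hbound j₂ hj₂ x (List.mem_toFinset.2 hx)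
        have : (⟨x, hxn⟩ : Fin n) ∈ Finset.attachFin (Lb 0 (List.ofFn j₂)).toFinset
            (hbound j₂ hj₂) := by
          rw [Finset.mem_attachFin]; exact List.mem_toFinset.2 hx
        rw [← heq, Finset.mem_attachFin] at this
        exact List.mem_toFinset.1 this
    exact List.ofFn_inj.1 (Lb_inj (by simp) hmem)
  · -- surjective
    intro t ht
    rw [Finset.mem_powersetCard_univ] at ht
    obtain ⟨l, hsort, hlen, hmem, _⟩ := minor_eq_dval F hF' t
    have hbnd : ∀ x ∈ l, 0 ≤ x ∧ x < 0 + n := by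
      intro x hx
      obtain ⟨p, _, rfl⟩ := (hmem x).1 hx
      exact ⟨Nat.zero_le _, by omega⟩
    obtain ⟨ps, hplen, hpsum, hLb⟩ := Lb_surj n 0 l hsort hbnd
    rw [hlen, ht] at hplen hpsum
    have hplen' : ps.length = k + 1 := by omega
    set jf : Fin (k+1) → ℕ := fun i => ps.getD i 0 with hjf
    have hofn : List.ofFn jf = ps := by
      apply List.ext_getElem
      · simp [hplen']
      · intro i h1 h2
        simp only [List.getElem_ofFn, hjf]
        exact List.getD_eq_getElem ps 0 h2
    refine ⟨jf, ?_, ?_⟩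
    · rw [Finset.Nat.mem_antidiagonalTuple, ← List.sum_ofFn, hofn, hpsum]
    · ext p
      rw [Finset.mem_attachFin, List.mem_toFinset, hofn, hLb, hmem]
      constructor
      · rintro ⟨q, hq, hqp⟩
        rwa [← Fin.val_injective hqp]
      · intro hp
        exact ⟨p, hp, rfl⟩
  · -- values agree
    intro j hj
    obtain ⟨l, hsort, hlen, hmem, hdet⟩ :=
      minor_eq_dval F hF' (Finset.attachFin (Lb 0 (List.ofFn j)).toFinset (hbound j hj))
    have hl : l = Lb 0 (List.ofFn j) := by
      refine sorted_eq_of_mem_iff hsort (sorted_Lb _ _) ?_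
      intro x
      rw [hmem]
      constructor
      · rintro ⟨p, hp, rfl⟩
        rw [Finset.mem_attachFin, List.mem_toFinset] at hp
        exact hp
      · intro hx
        have hxn : x < n := hbound j hj x (List.mem_toFinset.2 hx)
        refine ⟨⟨x, hxn⟩, ?_, rfl⟩
        rw [Finset.mem_attachFin, List.mem_toFinset]
        exact hx
    rw [hdet, hl, dval_Lb, List.map_ofFn, List.prod_ofFn]
    rfl
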